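/- arXiv:2503.02719 — 8 statements merged into one kernel-verified Lean document; each statement's English description precedes it below -/
import Mathlib

section
/- Let σ : ℝ → ℝ be monotone (nondecreasing), let t_k ≤ t_{k+1} be real times, let ε > 0, and let c, s_k, s_{k+1} ∈ ℝ. If |σ(t_k) − s_k| < ε, |σ(t_{k+1}) − s_{k+1}| < ε, s_k − c ≥ ε, and s_{k+1} − c ≥ ε, then σ(t) − c ≥ 0 for every t ∈ [t_k, t_{k+1}]. -/
theorem predicate_encoding_sound (σ : ℝ → ℝ) (hσ : Monotone σ)
    (tk tk1 : ℝ) (ht : tk ≤ tk1) (ε : ℝ) (hε : 0 < ε) (c sk sk1 : ℝ)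
    (h1 : |σ tk - sk| < ε) (h2 : |σ tk1 - sk1| < ε)
    (h3 : sk - c ≥ ε) (h4 : sk1 - c ≥ ε) :
    ∀ t ∈ Set.Icc tk tk1, σ t - c ≥ 0 := by
  intro t ht'
  have h1' := abs_lt.mp h1
  have h := hσ ht'.1
  linarith [h1'.1]
end

section
/- Let σ : ℝ → ℝ be monotone (nondecreasing), let t_k ≤ t_{k+1} be real times, let ε > 0, and let c, s_k, s_{k+1} ∈ ℝ. If |σ(t_k) − s_k| < ε, |σ(t_{k+1}) − s_{k+1}| < ε, s_k − c ≤ −ε, and s_{k+1} − c ≤ −ε, then σ(t) − c < 0 for every t ∈ [t_k, t_{k+1}]. -/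
theorem negated_predicate_encoding_sound (σ : ℝ → ℝ) (hσ : Monotone σ)
    (tk tk1 : ℝ) (ht : tk ≤ tk1) (ε : ℝ) (hε : 0 < ε) (c sk sk1 : ℝ)
    (h1 : |σ tk - sk| < ε) (h2 : |σ tk1 - sk1| < ε)
    (h3 : sk - c ≤ -ε) (h4 : sk1 - c ≤ -ε) :
    ∀ t ∈ Set.Icc tk tk1, σ t - c < 0 := by
  intro t ht'
  have := hσ ht'.2
  have := abs_lt.mp h2
  linarith [this.1, this.2]
end

section
/- Let P : ℝ → Prop, let t_0 ≤ t_1 ≤ … ≤ t_K be real times (K ≥ 1), let k ∈ {0, …, K−1}, let a ≤ b be reals, and let ε_t > 0. Assume the coverage condition [t_k + a, t_{k+1} + b] ⊆ [t_0, t_K], and assume that for every l ∈ {0, …, K−1} such that [t_l, t_{l+1}] ∩ [t_k + a − ε_t, t_{k+1} + b] ≠ ∅ we have P s for all s ∈ [t_l, t_{l+1}]. Then for every t ∈ [t_k, t_{k+1}] and every s ∈ [t + a, t + b], P s holds. -/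
lemma find_segment (t : ℕ → ℝ) :
    ∀ K : ℕ, 1 ≤ K → (∀ l < K, t l ≤ t (l + 1)) →
    ∀ s : ℝ, t 0 ≤ s → s ≤ t K → ∃ l < K, t l ≤ s ∧ s ≤ t (l + 1) := by
  intro K
  induction K with
  | zero => omega
  | succ n ih =>
    intro _ ht s h0 hs
    by_cases hn : 1 ≤ n
    · by_cases hsn : s ≤ t n
      · obtain ⟨l, hl, h⟩ := ih hn (fun l hl => ht l (by omega)) s h0 hsn
        exact ⟨l, by omega, h⟩
      · exact ⟨n, by omega, le_of_not_ge hsn, hs⟩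
    · have : n = 0 := by omega
      subst this
      exact ⟨0, by omega, h0, hs⟩

theorem always_encoding_sound (P : ℝ → Prop) (K : ℕ) (hK : 1 ≤ K)
    (t : ℕ → ℝ) (ht : ∀ l < K, t l ≤ t (l + 1))
    (k : ℕ) (hk : k < K) (a b : ℝ) (hab : a ≤ b) (εt : ℝ) (hεt : 0 < εt)
    (hcov : Set.Icc (t k + a) (t (k + 1) + b) ⊆ Set.Icc (t 0) (t K))
    (hseg : ∀ l < K,
      (Set.Icc (t l) (t (l + 1)) ∩ Set.Icc (t k + a - εt) (t (k + 1) + b)).Nonempty →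
      ∀ s ∈ Set.Icc (t l) (t (l + 1)), P s) :
    ∀ x ∈ Set.Icc (t k) (t (k + 1)), ∀ s ∈ Set.Icc (x + a) (x + b), P s := by
  intro x hx s hs
  obtain ⟨hx1, hx2⟩ := hx
  obtain ⟨hs1, hs2⟩ := hs
  have hsI : s ∈ Set.Icc (t k + a) (t (k + 1) + b) :=
    ⟨by linarith, by linarith⟩
  obtain ⟨h0, hKs⟩ := hcov hsI
  obtain ⟨l, hl, hl1, hl2⟩ := find_segment t K hK ht s h0 hKs
  exact hseg l hl ⟨s, ⟨hl1, hl2⟩, ⟨by linarith [hsI.1], hsI.2⟩⟩ s ⟨hl1, hl2⟩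
end

section
/- Let P : ℝ → Prop, let t_0 ≤ t_1 ≤ … ≤ t_K be real times (K ≥ 1), let k ∈ {0, …, K−1}, let 0 ≤ a ≤ b be reals, and let ε_t > 0. Assume t_{k+1} − t_k ≤ b − a − ε_t, and assume there exists l ∈ {0, …, K−1} such that [t_l, t_{l+1}] ∩ [t_{k+1} + a, t_k + b − ε_t] ≠ ∅ and P s holds for all s ∈ [t_l, t_{l+1}]. Then for every t ∈ [t_k, t_{k+1}] there exists s ∈ [t + a, t + b] such that P s holds. -/
theorem eventually_encoding_sound (P : ℝ → Prop) (K : ℕ) (hK : 1 ≤ K)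
    (t : ℕ → ℝ) (ht : ∀ l < K, t l ≤ t (l + 1))
    (k : ℕ) (hk : k < K) (a b : ℝ) (ha : 0 ≤ a) (hab : a ≤ b) (εt : ℝ) (hεt : 0 < εt)
    (hlen : t (k + 1) - t k ≤ b - a - εt)
    (hex : ∃ l < K,
      (Set.Icc (t l) (t (l + 1)) ∩ Set.Icc (t (k + 1) + a) (t k + b - εt)).Nonempty ∧
      ∀ s ∈ Set.Icc (t l) (t (l + 1)), P s) :
    ∀ x ∈ Set.Icc (t k) (t (k + 1)), ∃ s ∈ Set.Icc (x + a) (x + b), P s := by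
  obtain ⟨l, hl, ⟨y, ⟨hy1, hy2⟩⟩, hP⟩ := hex
  intro x hx
  refine ⟨y, ⟨?_, ?_⟩, hP y hy1⟩
  · linarith [hy2.1, hx.2]
  · linarith [hy2.2, hx.1]
end

section
/- Let P₁, P₂ : ℝ → Prop, let t_0 ≤ t_1 ≤ … ≤ t_K be real times (K ≥ 1), let k ∈ {0, …, K−1}, let 0 ≤ a ≤ b be reals, and let ε_t > 0. Assume there exists l ∈ {0, …, K−1} such that [t_l, t_{l+1}] ∩ [t_{k+1} + a, t_k + b − ε_t] ≠ ∅, P₂ s holds for all s ∈ [t_l, t_{l+1}], and P₁ s holds for all s ∈ [t_k, t_{l+1}]. Then for every t ∈ [t_k, t_{k+1}] there exists t' ∈ [t + a, t + b] such that P₂ t' holds and P₁ t'' holds for all t'' ∈ [t, t']. -/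
theorem until_encoding_sound (P₁ P₂ : ℝ → Prop) (K : ℕ) (hK : 1 ≤ K)
    (t : ℕ → ℝ) (ht : ∀ l < K, t l ≤ t (l + 1))
    (k : ℕ) (hk : k < K) (a b : ℝ) (ha : 0 ≤ a) (hab : a ≤ b) (εt : ℝ) (hεt : 0 < εt)
    (hex : ∃ l < K,
      (Set.Icc (t l) (t (l + 1)) ∩ Set.Icc (t (k + 1) + a) (t k + b - εt)).Nonempty ∧
      (∀ s ∈ Set.Icc (t l) (t (l + 1)), P₂ s) ∧
      (∀ s ∈ Set.Icc (t k) (t (l + 1)), P₁ s)) :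
    ∀ x ∈ Set.Icc (t k) (t (k + 1)),
      ∃ t' ∈ Set.Icc (x + a) (x + b), P₂ t' ∧ ∀ t'' ∈ Set.Icc x t', P₁ t'' := by
  obtain ⟨l, hl, ⟨s, ⟨⟨hs1, hs2⟩, hs3, hs4⟩⟩, hP2, hP1⟩ := hex
  intro x ⟨hx1, hx2⟩
  refine ⟨s, ⟨by linarith, by linarith⟩, hP2 s ⟨hs1, hs2⟩, ?_⟩
  intro t'' ⟨h1, h2⟩
  exact hP1 t'' ⟨by linarith, by linarith⟩
end

section
/- Let T > 0 and let σ_i, σ_{i'} : ℝ → ℝ be monotone (nondecreasing) functions. Let l, u, l', u' ∈ ℝ. Suppose there exists t* ∈ [0, T] such that σ_i(t*) ≥ u and σ_{i'}(t) < l' for all t ∈ [0, t*]. Then there is no t ∈ [0, T] with both σ_i(t) ∈ [l, u) and σ_{i'}(t) ∈ [l', u']. -/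
theorem interference_until_sound (T : ℝ) (hT : 0 < T)
    (σi σi' : ℝ → ℝ) (hσi : Monotone σi) (hσi' : Monotone σi')
    (l u l' u' : ℝ)
    (h : ∃ ts ∈ Set.Icc (0 : ℝ) T, σi ts ≥ u ∧ ∀ t ∈ Set.Icc 0 ts, σi' t < l') :
    ¬ ∃ t ∈ Set.Icc (0 : ℝ) T, σi t ∈ Set.Ico l u ∧ σi' t ∈ Set.Icc l' u' := by
  rintro ⟨t, ⟨ht0, htT⟩, ⟨_, htu⟩, ⟨htl', _⟩⟩
  obtain ⟨ts, ⟨hts0, _⟩, hu, hbefore⟩ := h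
  rcases le_total t ts with hle | hle
  · exact absurd (hbefore t ⟨ht0, hle⟩) (not_lt.2 htl')
  · exact absurd (hu.trans (hσi hle)) (not_le.2 htu)
end

section
/- Let T > 0 and let σ_i, σ_{i'} : ℝ → ℝ be monotone (nondecreasing) functions. Let C ⊆ ℝ × ℝ and let ([l_m, u_m], [l'_m, u'_m]), for m in a finite index set, be a family of interval pairs such that C ⊆ ⋃_m ([l_m, u_m) × [l'_m, u'_m)). Suppose that for each m, either (i) there exists t* ∈ [0, T] with σ_i(t*) ≥ u_m and σ_{i'}(t) < l'_m for all t ∈ [0, t*], or (ii) there exists t* ∈ [0, T] with σ_{i'}(t*) ≥ u'_m and σ_i(t) < l_m for all t ∈ [0, t*]. Then for every t ∈ [0, T], the pair (σ_i(t), σ_{i'}(t)) does not belong to C. -/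
theorem interference_constraints_avoid_collision {ι : Type*} [Fintype ι]
    (T : ℝ) (hT : 0 < T)
    (σi σi' : ℝ → ℝ) (hσi : Monotone σi) (hσi' : Monotone σi')
    (C : Set (ℝ × ℝ)) (l u l' u' : ι → ℝ)
    (hC : C ⊆ ⋃ m : ι, Set.Ico (l m) (u m) ×ˢ Set.Ico (l' m) (u' m))
    (h : ∀ m : ι,
      (∃ ts ∈ Set.Icc (0 : ℝ) T, σi ts ≥ u m ∧ ∀ t ∈ Set.Icc 0 ts, σi' t < l' m) ∨
      (∃ ts ∈ Set.Icc (0 : ℝ) T, σi' ts ≥ u' m ∧ ∀ t ∈ Set.Icc 0 ts, σi t < l m)) :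
    ∀ t ∈ Set.Icc (0 : ℝ) T, (σi t, σi' t) ∉ C := by
  intro t ht hmem
  obtain ⟨m, hm⟩ := Set.mem_iUnion.mp (hC hmem)
  obtain ⟨⟨hl, hu⟩, ⟨hl', hu'⟩⟩ := hm
  rcases h m with ⟨ts, hts, hge, hall⟩ | ⟨ts, hts, hge, hall⟩
  · have hlt : t ≤ ts := by
      by_contra hc
      exact absurd (hσi (le_of_not_ge hc)) (not_le.mpr (lt_of_lt_of_le hu hge))
    exact absurd hl' (not_le.mpr (hall t ⟨ht.1, hlt⟩))
  · have hlt : t ≤ ts := by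
      by_contra hc
      exact absurd (hσi' (le_of_not_ge hc)) (not_le.mpr (lt_of_lt_of_le hu' hge))
    exact absurd hl (not_le.mpr (hall t ⟨ht.1, hlt⟩))
end

section
/- Define RP‑STL formulas (without until) as the inductive type with constructors: predicate μ(c) and negated predicate ¬μ(c) for a real threshold c, counting formula Cnt(φ_1, …, φ_L; m) for formulas φ_l and 1 ≤ m ≤ L, conjunction φ₁ ∧ φ₂, disjunction φ₁ ∨ φ₂, always G_{[a,b]}φ, and eventually F_{[a,b]}φ, with 0 ≤ a ≤ b in all temporal operators. For a monotone (nondecreasing) signal σ : ℝ → ℝ, define satisfaction (σ, t) ⊨ φ recursively: (σ, t) ⊨ μ(c) iff σ(t) − c ≥ 0; (σ, t) ⊨ ¬μ(c) iff σ(t) − c < 0; (σ, t) ⊨ Cnt(φ_1,…,φ_L; m) iff at least m of the φ_l are satisfied at t; ∧ and ∨ are standard; (σ, t) ⊨ G_{[a,b]}φ iff (σ, t') ⊨ φ for all t' ∈ [t+a, t+b]; (σ, t) ⊨ F_{[a,b]}φ iff (σ, t') ⊨ φ for some t' ∈ [t+a, t+b]. Fix times t_0 ≤ … ≤ t_K,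 stamped values s_0, …, s_K ∈ ℝ, ε > 0, ε_t > 0, and let Δ = max_l (t_{l+1} − t_l). Define the Boolean encoding E_k(φ) for k ∈ {0, …, K−1} recursively: E_k(μ(c)) := (s_k − c ≥ ε) ∧ (s_{k+1} − c ≥ ε); E_k(¬μ(c)) := (s_k − c ≤ −ε) ∧ (s_{k+1} − c ≤ −ε); E_k(Cnt(φ_1,…,φ_L; m)) := at least m of E_k(φ_1), …, E_k(φ_L) hold; E_k(φ₁ ∧ φ₂) := E_k(φ₁) ∧ E_k(φ₂); E_k(φ₁ ∨ φ₂) := E_k(φ₁) ∨ E_k(φ₂); E_k(G_{[a,b]}φ) := for every l with [t_l, t_{l+1}] ∩ [t_k + a − ε_t, t_{k+1} + b] ≠ ∅, E_l(φ); E_k(F_{[a,b]}φ) := (t_{k+1} − t_k ≤ b − a − ε_t) ∧ (there exists l with [t_l, t_{l+1}] ∩ [t_{k+1} + a, t_k + b − ε_t] ≠ ∅ and E_l(φ)). Define the padded horizon H(φ) by H(μ) = H(¬μ) = 0, H(Cnt) = max_l H(φ_l), H(∧), H(∨) = max of the two, H(G_{[a,b]}φ) = H(F_{[a,b]}φ)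 = b + Δ + H(φ). Theorem (soundness): for every k ∈ {0, …, K−1} with t_{k+1} + H(φ) ≤ t_K, if E_k(φ) holds, then every monotone function σ : ℝ → ℝ with |σ(t_l) − s_l| < ε for all l ∈ {0, …, K} satisfies (σ, t) ⊨ φ for all t ∈ [t_k, t_{k+1}]. -/
/-- RP-STL formulas (without until): predicate, negated predicate, counting
formula, conjunction, disjunction, always, eventually. -/
inductive RPSTL : Type where
  | pred (c : ℝ)
  | npred (c : ℝ)
  | cnt (L : ℕ) (φ : Fin L → RPSTL) (m : ℕ)
  | conj (φ₁ φ₂ : RPSTL)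
  | disj (φ₁ φ₂ : RPSTL)
  | always (a b : ℝ) (φ : RPSTL)
  | eventually (a b : ℝ) (φ : RPSTL)

/-- Well-formedness: `1 ≤ m ≤ L` in counting formulas, `0 ≤ a ≤ b` in
temporal operators. -/
def RPSTL.WF : RPSTL → Prop
  | .pred _ => True
  | .npred _ => True
  | .cnt L φ m => 1 ≤ m ∧ m ≤ L ∧ ∀ l, (φ l).WF
  | .conj φ₁ φ₂ => φ₁.WF ∧ φ₂.WF
  | .disj φ₁ φ₂ => φ₁.WF ∧ φ₂.WF
  | .always a b φ => 0 ≤ a ∧ a ≤ b ∧ φ.WF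
  | .eventually a b φ => 0 ≤ a ∧ a ≤ b ∧ φ.WF

/-- Satisfaction `(σ, t) ⊨ φ`. The counting formula is satisfied iff at least
`m` of the subformulas are satisfied. -/
def RPSTL.sat (σ : ℝ → ℝ) : RPSTL → ℝ → Prop
  | .pred c, t => σ t - c ≥ 0
  | .npred c, t => σ t - c < 0
  | .cnt L φ m, t => ∃ S : Finset (Fin L), m ≤ S.card ∧ ∀ l ∈ S, (φ l).sat σ t
  | .conj φ₁ φ₂, t => φ₁.sat σ t ∧ φ₂.sat σ t
  | .disj φ₁ φ₂, t => φ₁.sat σ t ∨ φ₂.sat σ t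
  | .always a b φ, t => ∀ t' ∈ Set.Icc (t + a) (t + b), φ.sat σ t'
  | .eventually a b φ, t => ∃ t' ∈ Set.Icc (t + a) (t + b), φ.sat σ t'

/-- The Boolean encoding `E_k(φ)` over the time stamps `t`, stamped values `s`,
tracking margin `ε` and timing margin `εt`, for segments `k ∈ {0, …, K-1}`. -/
def RPSTL.enc (K : ℕ) (t s : ℕ → ℝ) (ε εt : ℝ) : RPSTL → ℕ → Prop
  | .pred c, k => s k - c ≥ ε ∧ s (k + 1) - c ≥ ε
  | .npred c, k => s k - c ≤ -ε ∧ s (k + 1) - c ≤ -ε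
  | .cnt L φ m, k => ∃ S : Finset (Fin L), m ≤ S.card ∧ ∀ l ∈ S, (φ l).enc K t s ε εt k
  | .conj φ₁ φ₂, k => φ₁.enc K t s ε εt k ∧ φ₂.enc K t s ε εt k
  | .disj φ₁ φ₂, k => φ₁.enc K t s ε εt k ∨ φ₂.enc K t s ε εt k
  | .always a b φ, k => ∀ l < K,
      (Set.Icc (t l) (t (l + 1)) ∩ Set.Icc (t k + a - εt) (t (k + 1) + b)).Nonempty →
      φ.enc K t s ε εt l
  | .eventually a b φ, k => (t (k + 1) - t k ≤ b - a - εt) ∧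
      ∃ l < K,
        (Set.Icc (t l) (t (l + 1)) ∩ Set.Icc (t (k + 1) + a) (t k + b - εt)).Nonempty ∧
        φ.enc K t s ε εt l

/-- The padded horizon `H(φ)`, where `Δ` is the maximal segment length. -/
noncomputable def RPSTL.H (Δ : ℝ) : RPSTL → ℝ
  | .pred _ => 0
  | .npred _ => 0
  | .cnt L φ _ => ⨆ l : Fin L, (φ l).H Δ
  | .conj φ₁ φ₂ => max (φ₁.H Δ) (φ₂.H Δ)
  | .disj φ₁ φ₂ => max (φ₁.H Δ) (φ₂.H Δ)
  | .always _ b φ => b + Δ + φ.H Δ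
  | .eventually _ b φ => b + Δ + φ.H Δ


private lemma seg_exists : ∀ (K : ℕ), 1 ≤ K → ∀ (t : ℕ → ℝ),
    (∀ l < K, t l ≤ t (l + 1)) → ∀ x : ℝ, t 0 ≤ x → x ≤ t K →
    ∃ l < K, x ∈ Set.Icc (t l) (t (l + 1)) := by
  intro K
  induction K with
  | zero => omega
  | succ n ih =>
    intro _ t ht x h0 h1
    by_cases hn : n = 0
    · subst hn; exact ⟨0, Nat.zero_lt_one, h0, h1⟩
    · by_cases hx : x ≤ t n
      · obtain ⟨l, hl, hm⟩ := ih (by omega) t (fun l hl => ht l (by omega)) x h0 hx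
        exact ⟨l, by omega, hm⟩
      · exact ⟨n, Nat.lt_succ_self n, le_of_not_ge hx, h1⟩

private lemma tval_mono (K : ℕ) (t : ℕ → ℝ) (ht : ∀ l < K, t l ≤ t (l + 1)) :
    ∀ i j, i ≤ j → j ≤ K → t i ≤ t j := by
  intro i j hij hjK
  induction j with
  | zero => simp [Nat.le_zero.mp hij]
  | succ n ih =>
    rcases Nat.eq_or_lt_of_le hij with h | h
    · rw [h]
    · exact le_trans (ih (by omega) (by omega)) (ht n (by omega))

private lemma H_nonneg (Δ : ℝ) (hΔ : 0 ≤ Δ) : ∀ φ : RPSTL, φ.WF → 0 ≤ φ.H Δ := by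
  intro φ
  induction φ with
  | pred c => intro _; simp [RPSTL.H]
  | npred c => intro _; simp [RPSTL.H]
  | cnt L φ m ih =>
    rintro ⟨hm, hmL, hwf⟩
    have hL : 0 < L := by omega
    let l0 : Fin L := ⟨0, hL⟩
    calc (0:ℝ) ≤ (φ l0).H Δ := ih l0 (hwf l0)
      _ ≤ ⨆ l, (φ l).H Δ :=
        le_ciSup (f := fun j => (φ j).H Δ) (Set.finite_range _).bddAbove l0
      _ = (RPSTL.cnt L φ m).H Δ := by simp [RPSTL.H]
  | conj φ₁ φ₂ ih₁ ih₂ =>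
    rintro ⟨h1, h2⟩
    simp only [RPSTL.H]
    exact le_trans (ih₁ h1) (le_max_left _ _)
  | disj φ₁ φ₂ ih₁ ih₂ =>
    rintro ⟨h1, h2⟩
    simp only [RPSTL.H]
    exact le_trans (ih₁ h1) (le_max_left _ _)
  | always a b φ ih =>
    rintro ⟨ha, hab, hwf⟩
    have := ih hwf
    simp only [RPSTL.H]; linarith
  | eventually a b φ ih =>
    rintro ⟨ha, hab, hwf⟩
    have := ih hwf
    simp only [RPSTL.H]; linarith

/-- Soundness of the RP-STL MILP encoding: if `E_k(φ)` holds (and the padded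
horizon of `φ` fits within the planning horizon), then every monotone signal
passing within `ε` of each stamped value satisfies `φ` throughout `[t_k, t_{k+1}]`. -/
theorem rpstl_encoding_sound
    (K : ℕ) (hK : 1 ≤ K) (t s : ℕ → ℝ)
    (ht : ∀ l < K, t l ≤ t (l + 1))
    (ε εt : ℝ) (hε : 0 < ε) (hεt : 0 < εt)
    (Δ : ℝ) (hΔ : IsGreatest {d : ℝ | ∃ l < K, d = t (l + 1) - t l} Δ)
    (φ : RPSTL) (hwf : φ.WF)
    (k : ℕ) (hk : k < K)
    (hH : t (k + 1) + φ.H Δ ≤ t K)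
    (henc : φ.enc K t s ε εt k)
    (σ : ℝ → ℝ) (hσ : Monotone σ)
    (htrack : ∀ l ≤ K, |σ (t l) - s l| < ε) :
    ∀ x ∈ Set.Icc (t k) (t (k + 1)), φ.sat σ x := by
  have hΔ0 : 0 ≤ Δ := by
    obtain ⟨l, hl, hd⟩ := hΔ.1
    have := ht l hl
    linarith
  have hmono := tval_mono K t ht
  revert hwf k
  induction φ with
  | pred c =>
    intro _ k hk hH henc x hx
    simp only [RPSTL.enc] at henc
    simp only [RPSTL.sat]
    have h3 := htrack k (le_of_lt hk)
    rw [abs_lt] at h3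
    have h4 : σ (t k) ≤ σ x := hσ hx.1
    linarith [henc.1]
  | npred c =>
    intro _ k hk hH henc x hx
    simp only [RPSTL.enc] at henc
    simp only [RPSTL.sat]
    have h3 := htrack (k + 1) hk
    rw [abs_lt] at h3
    have h4 : σ x ≤ σ (t (k + 1)) := hσ hx.2
    linarith [henc.2]
  | cnt L φ m ih =>
    rintro ⟨hm, hmL, hwf⟩ k hk hH henc x hx
    simp only [RPSTL.enc] at henc
    obtain ⟨S, hS, hSl⟩ := henc
    refine ⟨S, hS, fun l hl => ?_⟩
    have hHl : t (k + 1) + (φ l).H Δ ≤ t K := by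
      have h1 : (φ l).H Δ ≤ ⨆ j, (φ j).H Δ :=
        le_ciSup (f := fun j => (φ j).H Δ) (Set.finite_range _).bddAbove l
      have h2 : (RPSTL.cnt L φ m).H Δ = ⨆ j, (φ j).H Δ := by simp [RPSTL.H]
      rw [h2] at hH
      linarith
    exact ih l (hwf l) k hk hHl (hSl l hl) x hx
  | conj φ₁ φ₂ ih₁ ih₂ =>
    rintro ⟨h1, h2⟩ k hk hH henc x hx
    simp only [RPSTL.enc] at henc
    simp only [RPSTL.H] at hH
    exact ⟨ih₁ h1 k hk (by have := le_max_left (φ₁.H Δ) (φ₂.H Δ); linarith)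
      henc.1 x hx,
      ih₂ h2 k hk (by have := le_max_right (φ₁.H Δ) (φ₂.H Δ); linarith)
      henc.2 x hx⟩
  | disj φ₁ φ₂ ih₁ ih₂ =>
    rintro ⟨h1, h2⟩ k hk hH henc x hx
    simp only [RPSTL.enc] at henc
    simp only [RPSTL.H] at hH
    rcases henc with h | h
    · exact Or.inl (ih₁ h1 k hk
        (by have := le_max_left (φ₁.H Δ) (φ₂.H Δ); linarith) h x hx)
    · exact Or.inr (ih₂ h2 k hk
        (by have := le_max_right (φ₁.H Δ) (φ₂.H Δ); linarith) h x hx)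
  | always a b φ ih =>
    rintro ⟨ha, hab, hwf⟩ k hk hH henc x hx
    simp only [RPSTL.enc] at henc
    simp only [RPSTL.H] at hH
    simp only [RPSTL.sat]
    intro t' ht'
    have hHφ : 0 ≤ φ.H Δ := H_nonneg Δ hΔ0 φ hwf
    have h0 : t 0 ≤ t' := by
      have := hmono 0 k (Nat.zero_le k) (le_of_lt hk)
      have := ht'.1
      have := hx.1
      linarith
    have hK' : t' ≤ t K := by
      have := ht'.2
      have := hx.2
      linarith
    obtain ⟨l, hl, hseg⟩ := seg_exists K hK t ht t' h0 hK'
    have hEl : φ.enc K t s ε εt l := by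
      refine henc l hl ⟨t', hseg, ?_, ?_⟩
      · have := ht'.1; have := hx.1; linarith
      · have := ht'.2; have := hx.2; linarith
    have hΔl : t (l + 1) - t l ≤ Δ := hΔ.2 ⟨l, hl, rfl⟩
    have hHl : t (l + 1) + φ.H Δ ≤ t K := by
      have h1 := hseg.1
      have h2 := hseg.2
      have := ht'.2
      have := hx.2
      linarith
    exact ih hwf l hl hHl hEl t' hseg
  | eventually a b φ ih =>
    rintro ⟨ha, hab, hwf⟩ k hk hH henc x hx
    simp only [RPSTL.enc] at henc
    simp only [RPSTL.H] at hH
    simp only [RPSTL.sat]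
    obtain ⟨hgap, l, hl, ⟨y, hy1, hy2⟩, hEl⟩ := henc
    have hHφ : 0 ≤ φ.H Δ := H_nonneg Δ hΔ0 φ hwf
    have hΔl : t (l + 1) - t l ≤ Δ := hΔ.2 ⟨l, hl, rfl⟩
    refine ⟨y, ⟨?_, ?_⟩, ?_⟩
    · have := hy2.1; have := hx.2; linarith
    · have := hy2.2; have := hx.1; linarith
    · have hHl : t (l + 1) + φ.H Δ ≤ t K := by
        have h1 := hy1.1
        have h2 := hy2.2
        have := hmono k (k + 1) (Nat.le_succ k) hk
        linarith
      exact ih hwf l hl hHl hEl y hy1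
end
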